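/- Let L be an e-cyclic residuated lattice, let (H_i)_{i ∈ I} be a family of convex subalgebras of L, and let K = C[⋃_{i ∈ I} H_i] be their join in the lattice of convex subalgebras. For a convex subalgebra H define Θ_H = {(a, b) ∈ L × L : (a\b) ∧ (b\a) ∧ e ∈ H}. Then Θ_K is the smallest equivalence relation on L that is compatible with ∨ and ∧ and contains Θ_{H_i} for every i ∈ I; that is, Θ_K is the join of the lattice congruences Θ_{H_i} in the congruence lattice of the lattice (L, ∨, ∧). -/

import Mathlib

universe u

/-- A residuated lattice: a lattice-ordered monoid with left and right residuals.
`ldiv x z` is `x \ z` and `rdiv z y` is `z / y`. -/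
class ResiduatedLattice (α : Type u) extends Lattice α, Monoid α where
  ldiv : α → α → α
  rdiv : α → α → α
  mul_le_iff_le_ldiv : ∀ x y z : α, x * y ≤ z ↔ y ≤ ldiv x z
  mul_le_iff_le_rdiv : ∀ x y z : α, x * y ≤ z ↔ x ≤ rdiv z y

namespace ResiduatedLattice

variable {α : Type u} [ResiduatedLattice α]

/-- `L` is e-cyclic if `x \ e = e / x` for all `x`. -/
def ECyclic (α : Type u) [ResiduatedLattice α] : Prop :=
  ∀ x : α, ldiv x 1 = rdiv 1 x

/-- Absolute value: `|x| = x ⊓ (e / x) ⊓ e`. -/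
def absv (x : α) : α := x ⊓ rdiv 1 x ⊓ 1

/-- A convex subalgebra: contains `e`, closed under all the operations, and order-convex. -/
structure IsConvexSubalgebra (H : Set α) : Prop where
  one_mem : (1 : α) ∈ H
  mul_mem : ∀ ⦃x⦄, x ∈ H → ∀ ⦃y⦄, y ∈ H → x * y ∈ H
  sup_mem : ∀ ⦃x⦄, x ∈ H → ∀ ⦃y⦄, y ∈ H → x ⊔ y ∈ H
  inf_mem : ∀ ⦃x⦄, x ∈ H → ∀ ⦃y⦄, y ∈ H → x ⊓ y ∈ H
  ldiv_mem : ∀ ⦃x⦄, x ∈ H → ∀ ⦃y⦄, y ∈ H → ldiv x y ∈ H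
  rdiv_mem : ∀ ⦃x⦄, x ∈ H → ∀ ⦃y⦄, y ∈ H → rdiv x y ∈ H
  convex : ∀ ⦃a⦄, a ∈ H → ∀ ⦃b⦄, b ∈ H → ∀ ⦃x⦄, a ≤ x → x ≤ b → x ∈ H

/-- `C[S]`: the smallest convex subalgebra containing `S`. -/
def convexClosure (S : Set α) : Set α :=
  ⋂₀ {H : Set α | IsConvexSubalgebra H ∧ S ⊆ H}

end ResiduatedLattice

open ResiduatedLattice

/-- The relation `Θ_H`: `a Θ_H b` iff `(a\b) ⊓ (b\a) ⊓ e ∈ H`. -/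
def theta {α : Type u} [ResiduatedLattice α] (H : Set α) (a b : α) : Prop :=
  ldiv a b ⊓ ldiv b a ⊓ 1 ∈ H

/-- Compatibility of a binary relation with the lattice operations. -/
def LatCompat {α : Type u} [ResiduatedLattice α] (r : α → α → Prop) : Prop :=
  ∀ a b c d : α, r a b → r c d → r (a ⊔ c) (b ⊔ d) ∧ r (a ⊓ c) (b ⊓ d)

section Aux

namespace ResiduatedLattice

variable {α : Type u} [ResiduatedLattice α]

lemma le_ldiv_iff {x y z : α} : y ≤ ldiv x z ↔ x * y ≤ z :=
  (mul_le_iff_le_ldiv x y z).symm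

lemma le_rdiv_iff {x y z : α} : x ≤ rdiv z y ↔ x * y ≤ z :=
  (mul_le_iff_le_rdiv x y z).symm

lemma mul_le_mul' {a b c d : α} (h1 : a ≤ b) (h2 : c ≤ d) : a * c ≤ b * d := by
  have h3 : b * c ≤ b * d := le_ldiv_iff.mp (le_trans h2 (le_ldiv_iff.mpr le_rfl))
  have h4 : a * c ≤ b * c := le_rdiv_iff.mp (le_trans h1 (le_rdiv_iff.mpr le_rfl))
  exact h4.trans h3

lemma sup_mul_le {a b c m : α} (h1 : a * c ≤ m) (h2 : b * c ≤ m) : (a ⊔ b) * c ≤ m :=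
  le_rdiv_iff.mp (sup_le (le_rdiv_iff.mpr h1) (le_rdiv_iff.mpr h2))

lemma mul_ldiv_le {x y : α} : x * ldiv x y ≤ y := le_ldiv_iff.mp le_rfl

lemma rdiv_mul_le {x y : α} : rdiv x y * y ≤ x := le_rdiv_iff.mp le_rfl

lemma absv_le_self {x : α} : absv x ≤ x := le_trans inf_le_left inf_le_left

lemma absv_le_one {x : α} : absv x ≤ 1 := inf_le_right

lemma absv_le_rdiv {x : α} : absv x ≤ rdiv 1 x := le_trans inf_le_left inf_le_right

lemma absv_mul_self_le_one {x : α} : absv x * x ≤ 1 := le_rdiv_iff.mp absv_le_rdiv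

lemma self_mul_absv_le_one (hec : ECyclic α) {x : α} : x * absv x ≤ 1 := by
  have h : absv x ≤ ldiv x 1 := by rw [hec x]; exact absv_le_rdiv
  exact le_ldiv_iff.mp h

lemma le_absv {x z : α} (h1 : z ≤ x) (h2 : z * x ≤ 1) (h3 : z ≤ 1) : z ≤ absv x :=
  le_inf (le_inf h1 (le_rdiv_iff.mpr h2)) h3

lemma one_le_absv_one : (1 : α) ≤ absv 1 :=
  le_absv le_rfl (by rw [one_mul]) le_rfl

lemma absv_key_mul (hec : ECyclic α) (x y : α) :
    absv x * absv y * absv x ≤ absv (x * y) := by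
  refine le_absv ?_ ?_ ?_
  · calc absv x * absv y * absv x ≤ x * y * 1 :=
          mul_le_mul' (mul_le_mul' absv_le_self absv_le_self) absv_le_one
      _ = x * y := mul_one _
  · have : absv x * absv y * absv x * (x * y) = absv x * (absv y * ((absv x * x) * y)) := by
      simp [mul_assoc]
    rw [this]
    calc absv x * (absv y * (absv x * x * y))
        ≤ absv x * (absv y * (1 * y)) :=
          mul_le_mul' le_rfl (mul_le_mul' le_rfl (mul_le_mul' absv_mul_self_le_one le_rfl))
      _ = absv x * (absv y * y) := by rw [one_mul]
      _ ≤ absv x * 1 := mul_le_mul' le_rfl absv_mul_self_le_one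
      _ = absv x := mul_one _
      _ ≤ 1 := absv_le_one
  · calc absv x * absv y * absv x ≤ 1 * 1 * 1 :=
        mul_le_mul' (mul_le_mul' absv_le_one absv_le_one) absv_le_one
      _ = 1 := by simp

lemma absv_key_ldiv (hec : ECyclic α) (x y : α) :
    absv x * absv y * absv x ≤ absv (ldiv x y) := by
  refine le_absv ?_ ?_ ?_
  · rw [le_ldiv_iff]
    have : x * (absv x * absv y * absv x) = (x * absv x) * absv y * absv x := by
      simp [mul_assoc]
    rw [this]
    calc (x * absv x) * absv y * absv x ≤ 1 * y * 1 :=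
          mul_le_mul' (mul_le_mul' (self_mul_absv_le_one hec) absv_le_self) absv_le_one
      _ = y := by simp
  · have : absv x * absv y * absv x * ldiv x y
        = absv x * (absv y * (absv x * ldiv x y)) := by simp [mul_assoc]
    rw [this]
    have h1 : absv x * ldiv x y ≤ y := le_trans (mul_le_mul' absv_le_self le_rfl) mul_ldiv_le
    calc absv x * (absv y * (absv x * ldiv x y))
        ≤ absv x * (absv y * y) := mul_le_mul' le_rfl (mul_le_mul' le_rfl h1)
      _ ≤ absv x * 1 := mul_le_mul' le_rfl absv_mul_self_le_one
      _ ≤ 1 := by rw [mul_one]; exact absv_le_one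
  · calc absv x * absv y * absv x ≤ 1 * 1 * 1 :=
        mul_le_mul' (mul_le_mul' absv_le_one absv_le_one) absv_le_one
      _ = 1 := by simp

lemma absv_key_rdiv (hec : ECyclic α) (x y : α) :
    absv y * absv x * absv y ≤ absv (rdiv x y) := by
  refine le_absv ?_ ?_ ?_
  · rw [le_rdiv_iff]
    have : absv y * absv x * absv y * y = absv y * absv x * (absv y * y) := by
      simp [mul_assoc]
    rw [this]
    calc absv y * absv x * (absv y * y) ≤ 1 * x * 1 :=
          mul_le_mul' (mul_le_mul' absv_le_one absv_le_self) absv_mul_self_le_one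
      _ = x := by simp
  · -- use e-cyclicity: enough to show (x/y) * w ≤ 1
    have hcyc : ldiv (rdiv x y) 1 = rdiv 1 (rdiv x y) := hec (rdiv x y)
    have key : rdiv x y * (absv y * absv x * absv y) ≤ 1 := by
      have : rdiv x y * (absv y * absv x * absv y)
          = ((rdiv x y * absv y) * absv x) * absv y := by simp [mul_assoc]
      rw [this]
      have h1 : rdiv x y * absv y ≤ x := le_trans (mul_le_mul' le_rfl absv_le_self) rdiv_mul_le
      calc ((rdiv x y * absv y) * absv x) * absv y
          ≤ (x * absv x) * absv y := mul_le_mul' (mul_le_mul' h1 le_rfl) le_rfl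
        _ ≤ 1 * 1 := mul_le_mul' (self_mul_absv_le_one hec) absv_le_one
        _ = 1 := by simp
    have : absv y * absv x * absv y ≤ ldiv (rdiv x y) 1 := le_ldiv_iff.mpr key
    rw [hcyc] at this
    exact le_rdiv_iff.mp this
  · calc absv y * absv x * absv y ≤ 1 * 1 * 1 :=
        mul_le_mul' (mul_le_mul' absv_le_one absv_le_one) absv_le_one
      _ = 1 := by simp

lemma absv_key_sup (x y : α) : absv x * absv y ≤ absv (x ⊔ y) := by
  have hx : absv x * absv y ≤ absv x := le_trans (mul_le_mul' le_rfl absv_le_one) (le_of_eq (mul_one _))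
  have hy : absv x * absv y ≤ absv y := le_trans (mul_le_mul' absv_le_one le_rfl) (le_of_eq (one_mul _))
  refine le_absv (le_trans hx (le_trans absv_le_self le_sup_left)) ?_
    (le_trans hx absv_le_one)
  have h1 : absv x * absv y * x ≤ 1 := le_trans (mul_le_mul' hx le_rfl) absv_mul_self_le_one
  have h2 : absv x * absv y * y ≤ 1 := le_trans (mul_le_mul' hy le_rfl) absv_mul_self_le_one
  exact le_ldiv_iff.mp (sup_le (le_ldiv_iff.mpr h1) (le_ldiv_iff.mpr h2))

lemma absv_key_inf (x y : α) : absv x * absv y ≤ absv (x ⊓ y) := by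
  have hx : absv x * absv y ≤ absv x := le_trans (mul_le_mul' le_rfl absv_le_one) (le_of_eq (mul_one _))
  have hy : absv x * absv y ≤ absv y := le_trans (mul_le_mul' absv_le_one le_rfl) (le_of_eq (one_mul _))
  refine le_absv (le_inf (hx.trans absv_le_self) (hy.trans absv_le_self)) ?_ (hx.trans absv_le_one)
  calc absv x * absv y * (x ⊓ y) ≤ absv x * (x ⊓ y) := mul_le_mul' hx le_rfl
    _ ≤ absv x * x := mul_le_mul' le_rfl inf_le_left
    _ ≤ 1 := absv_mul_self_le_one

lemma absv_key_convex {a b x : α} (ha : a ≤ x) (hb : x ≤ b) :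
    absv a * absv b ≤ absv x := by
  have h1 : absv a * absv b ≤ absv a := le_trans (mul_le_mul' le_rfl absv_le_one) (le_of_eq (mul_one _))
  have h2 : absv a * absv b ≤ absv b := le_trans (mul_le_mul' absv_le_one le_rfl) (le_of_eq (one_mul _))
  refine le_absv (h1.trans (absv_le_self.trans ha)) ?_ (h1.trans absv_le_one)
  calc absv a * absv b * x ≤ absv b * x := mul_le_mul' h2 le_rfl
    _ ≤ absv b * b := mul_le_mul' le_rfl hb
    _ ≤ 1 := absv_mul_self_le_one

end ResiduatedLattice

end Aux

section More
namespace ResiduatedLattice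
variable {α : Type u} [ResiduatedLattice α]

lemma IsConvexSubalgebra.absv_mem {H : Set α} (hH : IsConvexSubalgebra H) {x : α}
    (hx : x ∈ H) : absv x ∈ H :=
  hH.inf_mem (hH.inf_mem hx (hH.rdiv_mem hH.one_mem hx)) hH.one_mem

lemma convexClosure_isConvex (S : Set α) : IsConvexSubalgebra (convexClosure S) where
  one_mem := fun _ hT => hT.1.one_mem
  mul_mem := fun _ hx _ hy T hT => hT.1.mul_mem (hx T hT) (hy T hT)
  sup_mem := fun _ hx _ hy T hT => hT.1.sup_mem (hx T hT) (hy T hT)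
  inf_mem := fun _ hx _ hy T hT => hT.1.inf_mem (hx T hT) (hy T hT)
  ldiv_mem := fun _ hx _ hy T hT => hT.1.ldiv_mem (hx T hT) (hy T hT)
  rdiv_mem := fun _ hx _ hy T hT => hT.1.rdiv_mem (hx T hT) (hy T hT)
  convex := fun _ ha _ hb _ hax hxb T hT => hT.1.convex (ha T hT) (hb T hT) hax hxb

lemma subset_convexClosure (S : Set α) : S ⊆ convexClosure S :=
  fun _ hx _ hT => hT.2 hx

lemma convexClosure_min {S W : Set α} (hW : IsConvexSubalgebra W) (hSW : S ⊆ W) :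
    convexClosure S ⊆ W := fun _ hx => hx W ⟨hW, hSW⟩

/-- The "distance" element. -/
def dd (a b : α) : α := ldiv a b ⊓ ldiv b a ⊓ 1

lemma theta_iff {H : Set α} {a b : α} : theta H a b ↔ dd a b ∈ H := Iff.rfl

lemma dd_le_one {a b : α} : dd a b ≤ 1 := inf_le_right

lemma dd_le_ldiv {a b : α} : dd a b ≤ ldiv a b := le_trans inf_le_left inf_le_left

lemma dd_le_ldiv' {a b : α} : dd a b ≤ ldiv b a := le_trans inf_le_left inf_le_right

lemma mul_dd_le {a b : α} : a * dd a b ≤ b := le_ldiv_iff.mp dd_le_ldiv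

lemma mul_dd_le' {a b : α} : b * dd a b ≤ a := le_ldiv_iff.mp dd_le_ldiv'

lemma dd_comm (a b : α) : dd a b = dd b a := by
  rw [dd, dd, inf_comm (ldiv a b)]

lemma le_dd {a b z : α} (h1 : z ≤ ldiv a b) (h2 : z ≤ ldiv b a) (h3 : z ≤ 1) :
    z ≤ dd a b := le_inf (le_inf h1 h2) h3

lemma theta_equivalence {H : Set α} (hH : IsConvexSubalgebra H) :
    Equivalence (theta H) := by
  constructor
  · intro a
    have h : (1 : α) ≤ ldiv a a := le_ldiv_iff.mpr (le_of_eq (mul_one a))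
    have he : dd a a = 1 := le_antisymm dd_le_one (le_inf (le_inf h h) le_rfl)
    show dd a a ∈ H
    rw [he]; exact hH.one_mem
  · intro a b h
    show dd b a ∈ H
    rw [dd_comm]; exact h
  · intro a b c hab hbc
    have hab' : dd a b ∈ H := hab
    have hbc' : dd b c ∈ H := hbc
    have hm : dd a b * dd b c * dd a b ∈ H := hH.mul_mem (hH.mul_mem hab' hbc') hab'
    show dd a c ∈ H
    refine hH.convex hm hH.one_mem ?_ dd_le_one
    refine le_dd ?_ ?_ ?_
    · rw [le_ldiv_iff]
      have he : a * (dd a b * dd b c * dd a b) = ((a * dd a b) * dd b c) * dd a b := by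
        simp [mul_assoc]
      rw [he]
      calc ((a * dd a b) * dd b c) * dd a b ≤ (b * dd b c) * 1 :=
            mul_le_mul' (mul_le_mul' mul_dd_le le_rfl) dd_le_one
        _ ≤ c := by rw [mul_one]; exact mul_dd_le
    · rw [le_ldiv_iff]
      have he : c * (dd a b * dd b c * dd a b) = ((c * dd a b) * dd b c) * dd a b := by
        simp [mul_assoc]
      rw [he]
      calc ((c * dd a b) * dd b c) * dd a b ≤ ((c * 1) * dd b c) * dd a b :=
            mul_le_mul' (mul_le_mul' (mul_le_mul' le_rfl dd_le_one) le_rfl) le_rfl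
        _ = (c * dd b c) * dd a b := by rw [mul_one]
        _ ≤ b * dd a b := mul_le_mul' mul_dd_le' le_rfl
        _ ≤ a := mul_dd_le'
    · calc dd a b * dd b c * dd a b ≤ 1 * 1 * 1 :=
          mul_le_mul' (mul_le_mul' dd_le_one dd_le_one) dd_le_one
        _ = 1 := by simp

lemma dd_le_dd_sup (a b c : α) : dd a b ≤ dd (a ⊔ c) (b ⊔ c) := by
  refine le_dd ?_ ?_ dd_le_one
  · rw [le_ldiv_iff]
    refine sup_mul_le (le_trans mul_dd_le le_sup_left) ?_
    exact le_trans (mul_le_mul' le_rfl dd_le_one)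
      (le_trans (le_of_eq (mul_one c)) le_sup_right)
  · rw [le_ldiv_iff]
    refine sup_mul_le (le_trans mul_dd_le' le_sup_left) ?_
    exact le_trans (mul_le_mul' le_rfl dd_le_one)
      (le_trans (le_of_eq (mul_one c)) le_sup_right)

lemma dd_le_dd_inf (a b c : α) : dd a b ≤ dd (a ⊓ c) (b ⊓ c) := by
  refine le_dd ?_ ?_ dd_le_one
  · rw [le_ldiv_iff]
    refine le_inf (le_trans (mul_le_mul' inf_le_left le_rfl) mul_dd_le) ?_
    exact le_trans (mul_le_mul' inf_le_right dd_le_one) (le_of_eq (mul_one c))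
  · rw [le_ldiv_iff]
    refine le_inf (le_trans (mul_le_mul' inf_le_left le_rfl) mul_dd_le') ?_
    exact le_trans (mul_le_mul' inf_le_right dd_le_one) (le_of_eq (mul_one c))

lemma theta_compat {H : Set α} (hH : IsConvexSubalgebra H) : LatCompat (theta H) := by
  intro a b c d hab hcd
  have hab' : dd a b ∈ H := hab
  have hcd' : dd c d ∈ H := hcd
  have heq := theta_equivalence hH
  constructor
  · have hs1 : theta H (a ⊔ c) (b ⊔ c) :=
      hH.convex hab' hH.one_mem (dd_le_dd_sup a b c) dd_le_one
    have hs2 : theta H (b ⊔ c) (b ⊔ d) := by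
      have h : dd (c ⊔ b) (d ⊔ b) ∈ H :=
        hH.convex hcd' hH.one_mem (dd_le_dd_sup c d b) dd_le_one
      show dd (b ⊔ c) (b ⊔ d) ∈ H
      rwa [sup_comm b c, sup_comm b d]
    exact heq.trans hs1 hs2
  · have hs1 : theta H (a ⊓ c) (b ⊓ c) :=
      hH.convex hab' hH.one_mem (dd_le_dd_inf a b c) dd_le_one
    have hs2 : theta H (b ⊓ c) (b ⊓ d) := by
      have h : dd (c ⊓ b) (d ⊓ b) ∈ H :=
        hH.convex hcd' hH.one_mem (dd_le_dd_inf c d b) dd_le_one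
      show dd (b ⊓ c) (b ⊓ d) ∈ H
      rwa [inf_comm b c, inf_comm b d]
    exact heq.trans hs1 hs2

lemma prod_le_one {l : List α} (h : ∀ u ∈ l, u ≤ 1) : l.prod ≤ 1 := by
  induction l with
  | nil => simp
  | cons a t ih =>
    rw [List.prod_cons]
    calc a * t.prod ≤ 1 * 1 :=
        mul_le_mul' (h a (by simp)) (ih fun u hu => h u (by simp [hu]))
      _ = 1 := by simp

lemma prod_append_le {l1 l2 : List α} {u v : α} (h1 : l1.prod ≤ u) (h2 : l2.prod ≤ v) :
    (l1 ++ l2).prod ≤ u * v := by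
  rw [List.prod_append]; exact mul_le_mul' h1 h2

/-- The candidate for the join of convex subalgebras: elements dominated (in absolute
value) by a product of negative elements of `T`. -/
def prodSet (T : Set α) : Set α :=
  {x | ∃ l : List α, (∀ u ∈ l, u ≤ 1 ∧ u ∈ T) ∧ l.prod ≤ absv x}

lemma prodSet_isConvex (hec : ECyclic α) (T : Set α) :
    IsConvexSubalgebra (prodSet (α := α) T) := by
  constructor
  · exact ⟨[], by simp, by simpa using one_le_absv_one⟩
  · rintro x ⟨l1, h1, hp1⟩ y ⟨l2, h2, hp2⟩
    refine ⟨l1 ++ l2 ++ l1, ?_, ?_⟩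
    · intro u hu
      simp only [List.mem_append] at hu
      rcases hu with (hu | hu) | hu
      exacts [h1 u hu, h2 u hu, h1 u hu]
    · exact le_trans (prod_append_le (prod_append_le hp1 hp2) hp1) (absv_key_mul hec x y)
  · rintro x ⟨l1, h1, hp1⟩ y ⟨l2, h2, hp2⟩
    refine ⟨l1 ++ l2, ?_, le_trans (prod_append_le hp1 hp2) (absv_key_sup x y)⟩
    intro u hu
    simp only [List.mem_append] at hu
    rcases hu with hu | hu
    exacts [h1 u hu, h2 u hu]
  · rintro x ⟨l1, h1, hp1⟩ y ⟨l2, h2, hp2⟩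
    refine ⟨l1 ++ l2, ?_, le_trans (prod_append_le hp1 hp2) (absv_key_inf x y)⟩
    intro u hu
    simp only [List.mem_append] at hu
    rcases hu with hu | hu
    exacts [h1 u hu, h2 u hu]
  · rintro x ⟨l1, h1, hp1⟩ y ⟨l2, h2, hp2⟩
    refine ⟨l1 ++ l2 ++ l1, ?_, ?_⟩
    · intro u hu
      simp only [List.mem_append] at hu
      rcases hu with (hu | hu) | hu
      exacts [h1 u hu, h2 u hu, h1 u hu]
    · exact le_trans (prod_append_le (prod_append_le hp1 hp2) hp1) (absv_key_ldiv hec x y)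
  · rintro x ⟨l1, h1, hp1⟩ y ⟨l2, h2, hp2⟩
    refine ⟨l2 ++ l1 ++ l2, ?_, ?_⟩
    · intro u hu
      simp only [List.mem_append] at hu
      rcases hu with (hu | hu) | hu
      exacts [h2 u hu, h1 u hu, h2 u hu]
    · exact le_trans (prod_append_le (prod_append_le hp2 hp1) hp2) (absv_key_rdiv hec x y)
  · rintro a ⟨l1, h1, hp1⟩ b ⟨l2, h2, hp2⟩ x hax hxb
    refine ⟨l1 ++ l2, ?_, le_trans (prod_append_le hp1 hp2) (absv_key_convex hax hxb)⟩
    intro u hu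
    simp only [List.mem_append] at hu
    rcases hu with hu | hu
    exacts [h1 u hu, h2 u hu]

end ResiduatedLattice
end More

/-- `Θ_K`, for `K` the join of the convex subalgebras `H i`, is the
smallest lattice congruence containing every `Θ_{H i}`. -/
theorem stmt6 {α : Type u} [ResiduatedLattice α] {ι : Type*} (hec : ECyclic α)
    (H : ι → Set α) (hH : ∀ i, IsConvexSubalgebra (H i))
    (K : Set α) (hK : K = convexClosure (⋃ i, H i)) :
    Equivalence (theta K) ∧ LatCompat (theta K) ∧
    (∀ i, ∀ a b : α, theta (H i) a b → theta K a b) ∧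
    (∀ r : α → α → Prop, Equivalence r → LatCompat r →
      (∀ i, ∀ a b : α, theta (H i) a b → r a b) →
      ∀ a b : α, theta K a b → r a b) := by
  have hKconv : IsConvexSubalgebra K := by
    rw [hK]; exact convexClosure_isConvex _
  refine ⟨theta_equivalence hKconv, theta_compat hKconv, ?_, ?_⟩
  · intro i a b hab
    show dd a b ∈ K
    rw [hK]
    exact subset_convexClosure _ (Set.mem_iUnion.mpr ⟨i, hab⟩)
  · intro r hre hrc hcont a b hab
    -- `K` is contained in the product-set over `⋃ i, H i`
    have hsub : K ⊆ prodSet (⋃ i, H i) := by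
      rw [hK]
      refine convexClosure_min (prodSet_isConvex hec _) ?_
      intro s hs
      obtain ⟨i, hsi⟩ := Set.mem_iUnion.mp hs
      exact ⟨[absv s], by
        intro u hu
        simp only [List.mem_singleton] at hu
        subst hu
        exact ⟨absv_le_one, Set.mem_iUnion.mpr ⟨i, (hH i).absv_mem hsi⟩⟩,
        by simp⟩
    obtain ⟨l, hl, hple⟩ := hsub hab
    have hd : l.prod ≤ dd a b := hple.trans absv_le_self
    -- the chain lemma
    have chain : ∀ l : List α, (∀ u ∈ l, u ≤ 1 ∧ u ∈ ⋃ i, H i) →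
        ∀ p q : α, p ≤ q → q * l.prod ≤ p → r p q := by
      intro l
      induction l with
      | nil =>
        intro _ p q hpq h
        rw [List.prod_nil, mul_one] at h
        exact (le_antisymm hpq h) ▸ hre.refl p
      | cons u t ih =>
        intro hl p q hpq h
        obtain ⟨hu1, hu2⟩ := hl u (List.mem_cons_self (a := u) (l := t))
        obtain ⟨i, hui⟩ := Set.mem_iUnion.mp hu2
        set m := q * u ⊔ p with hm
        have hpm : p ≤ m := le_sup_right
        have hmq : m ≤ q :=
          sup_le (le_trans (mul_le_mul' le_rfl hu1) (le_of_eq (mul_one q))) hpq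
        have hqm : r q m := by
          apply hcont i
          show dd q m ∈ H i
          refine (hH i).convex hui (hH i).one_mem ?_ dd_le_one
          refine le_dd ?_ ?_ hu1
          · exact le_ldiv_iff.mpr le_sup_left
          · exact le_ldiv_iff.mpr
              (le_trans (mul_le_mul' le_rfl hu1) (le_trans (le_of_eq (mul_one m)) hmq))
        have hmt : m * t.prod ≤ p := by
          have hprodt : t.prod ≤ 1 :=
            prod_le_one (fun v hv => (hl v (List.mem_cons_of_mem _ hv)).1)
          refine sup_mul_le ?_ ?_
          · rw [List.prod_cons, ← mul_assoc] at h
            exact h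
          · exact le_trans (mul_le_mul' le_rfl hprodt) (le_of_eq (mul_one p))
        have hpm' : r p m := ih (fun v hv => hl v (List.mem_cons_of_mem _ hv)) p m hpm hmt
        exact hre.trans hpm' (hre.symm hqm)
    -- apply it to p = a ⊓ b, q = a ⊔ b
    have hq : (a ⊔ b) * l.prod ≤ a ⊓ b := by
      have hprodl : l.prod ≤ 1 := prod_le_one (fun v hv => (hl v hv).1)
      refine sup_mul_le (le_inf ?_ ?_) (le_inf ?_ ?_)
      · exact le_trans (mul_le_mul' le_rfl hprodl) (le_of_eq (mul_one a))
      · exact le_trans (mul_le_mul' le_rfl (hd.trans dd_le_ldiv)) mul_ldiv_le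
      · exact le_trans (mul_le_mul' le_rfl (hd.trans dd_le_ldiv')) mul_ldiv_le
      · exact le_trans (mul_le_mul' le_rfl hprodl) (le_of_eq (mul_one b))
    have hpq : r (a ⊓ b) (a ⊔ b) := chain l hl _ _ inf_le_sup hq
    have h1 : r a (a ⊔ b) := by
      have h := (hrc _ _ _ _ hpq (hre.refl a)).1
      rwa [sup_eq_right.mpr inf_le_left, sup_eq_left.mpr le_sup_left] at h
    have h2 : r b (a ⊔ b) := by
      have h := (hrc _ _ _ _ hpq (hre.refl b)).1
      rwa [sup_eq_right.mpr inf_le_right, sup_eq_left.mpr le_sup_right] at h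
    exact hre.trans h1 (hre.symm h2)
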